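/- Let r be a Hoehnke radical on S-acts whose radical class R_r = {A : r(A) = ∇_A} is closed under coproducts, and let Q be an r-injective S-act. Then Q has a zero element. -/
import Mathlib


universe u

variable {S : Type u} [Monoid S]

/-- An `S`-act homomorphism (equivariant map). -/
def IsActHom (S : Type u) [Monoid S] {A B : Type u} [MulAction S A] [MulAction S B]
    (f : A → B) : Prop :=
  ∀ (s : S) (a : A), f (s • a) = s • f a

/-- A subact: a nonempty subset closed under the action. -/
def IsSubact (S : Type u) [Monoid S] {A : Type u} [MulAction S A] (B : Set A) : Prop :=
  B.Nonempty ∧ ∀ (s : S), ∀ a ∈ B, s • a ∈ B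

/-- A congruence on an `S`-act: an equivalence relation compatible with the action. -/
structure ActCong (S : Type u) [Monoid S] (A : Type u) [MulAction S A] where
  r : A → A → Prop
  iseqv : Equivalence r
  compat : ∀ (s : S) (a b : A), r a b → r (s • a) (s • b)

def ActCong.toSetoid {A : Type u} [MulAction S A] (χ : ActCong S A) : Setoid A :=
  ⟨χ.r, χ.iseqv⟩

instance actQuotSMul {A : Type u} [MulAction S A] (χ : ActCong S A) :
    SMul S (Quotient χ.toSetoid) :=
  ⟨fun s => Quotient.map (fun a => s • a) (fun a b h => χ.compat s a b h)⟩

instance actQuotMulAction {A : Type u} [MulAction S A] (χ : ActCong S A) :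
    MulAction S (Quotient χ.toSetoid) where
  one_smul := by
    intro x
    induction x using Quotient.inductionOn with
    | h a => exact congrArg (Quotient.mk χ.toSetoid) (one_smul S a)
  mul_smul := by
    intro s t x
    induction x using Quotient.inductionOn with
    | h a => exact congrArg (Quotient.mk χ.toSetoid) (mul_smul s t a)

/-- The Rees congruence determined by an action-closed subset `B`. -/
def reesCong {A : Type u} [MulAction S A] (B : Set A)
    (hB : ∀ (s : S), ∀ a ∈ B, s • a ∈ B) : ActCong S A where
  r a b := a = b ∨ (a ∈ B ∧ b ∈ B)
  iseqv := by
    constructor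
    · exact fun a => Or.inl rfl
    · rintro a b (rfl | ⟨h1, h2⟩)
      exacts [Or.inl rfl, Or.inr ⟨h2, h1⟩]
    · rintro a b c (rfl | ⟨h1, h2⟩) h
      · exact h
      · rcases h with rfl | ⟨h3, h4⟩
        exacts [Or.inr ⟨h1, h2⟩, Or.inr ⟨h1, h4⟩]
  compat := by
    rintro s a b (rfl | ⟨h1, h2⟩)
    exacts [Or.inl rfl, Or.inr ⟨hB s a h1, hB s b h2⟩]

/-- A Hoehnke radical on `S`-acts. -/
structure HoehnkeRadical (S : Type u) [Monoid S] : Type (u + 1) where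
  rad : ∀ (A : Type u) [MulAction S A], ActCong S A
  functorial : ∀ {A B : Type u} [MulAction S A] [MulAction S B] (f : A → B),
    IsActHom S f → ∀ a a' : A, (rad A).r a a' → (rad B).r (f a) (f a')
  radQuot : ∀ (A : Type u) [MulAction S A],
    ∀ x y : Quotient (rad A).toSetoid, (rad (Quotient (rad A).toSetoid)).r x y → x = y

/-- The closure `c^r_A(B)`: preimage of the `r(A/B)`-class of the collapsed point `B`. -/
def rClosure (r : HoehnkeRadical S) {A : Type u} [MulAction S A] (B : Set A)
    (hB : ∀ (s : S), ∀ a ∈ B, s • a ∈ B) : Set A :=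
  {a : A | ∃ b ∈ B, (r.rad (Quotient (reesCong B hB).toSetoid)).r
      (Quotient.mk (reesCong B hB).toSetoid a) (Quotient.mk (reesCong B hB).toSetoid b)}

/-- `B` is `r`-dense in `A`: the Rees quotient `A/B` is a radical act, `r(A/B) = ∇`. -/
def IsRDense (r : HoehnkeRadical S) {A : Type u} [MulAction S A] (B : Set A)
    (hB : ∀ (s : S), ∀ a ∈ B, s • a ∈ B) : Prop :=
  ∀ x y : Quotient (reesCong B hB).toSetoid, (r.rad (Quotient (reesCong B hB).toSetoid)).r x y

theorem image_closed {A C : Type u} [MulAction S A] [MulAction S C] {f : A → C}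
    (hf : IsActHom S f) {B : Set A} (hB : ∀ (s : S), ∀ a ∈ B, s • a ∈ B) :
    ∀ (s : S), ∀ c ∈ f '' B, s • c ∈ f '' B := by
  rintro s c ⟨a, ha, rfl⟩
  exact ⟨s • a, hB s a ha, hf s a⟩

theorem range_closed {A C : Type u} [MulAction S A] [MulAction S C] {f : A → C}
    (hf : IsActHom S f) :
    ∀ (s : S), ∀ c ∈ Set.range f, s • c ∈ Set.range f := by
  rintro s c ⟨a, rfl⟩
  exact ⟨s • a, hf s a⟩

theorem rClosure_closed (r : HoehnkeRadical S) {A : Type u} [MulAction S A]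
    (B : Set A) (hB : ∀ (s : S), ∀ a ∈ B, s • a ∈ B) :
    ∀ (s : S), ∀ a ∈ rClosure r B hB, s • a ∈ rClosure r B hB := by
  rintro s a ⟨b, hb, hab⟩
  exact ⟨s • b, hB s b hb, (r.rad _).compat s _ _ hab⟩

/-- The join of two congruences. -/
def congJoin {A : Type u} [MulAction S A] (τ₁ τ₂ : ActCong S A) : ActCong S A where
  r a b := ∀ θ : ActCong S A, (∀ x y, τ₁.r x y → θ.r x y) → (∀ x y, τ₂.r x y → θ.r x y) → θ.r a b
  iseqv := by
    constructor
    · exact fun a θ _ _ => θ.iseqv.refl a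
    · exact fun h θ h1 h2 => θ.iseqv.symm (h θ h1 h2)
    · exact fun h h' θ h1 h2 => θ.iseqv.trans (h θ h1 h2) (h' θ h1 h2)
  compat := fun s a b h θ h1 h2 => θ.compat s a b (h θ h1 h2)

/-- For `κ ≤ τ` the induced congruence `τ/κ` on the quotient `A/κ`. -/
def quotCong {A : Type u} [MulAction S A] (κ τ : ActCong S A)
    (h : ∀ a b, κ.r a b → τ.r a b) : ActCong S (Quotient κ.toSetoid) where
  r x y := ∃ a b : A, x = Quotient.mk κ.toSetoid a ∧ y = Quotient.mk κ.toSetoid b ∧ τ.r a b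
  iseqv := by
    constructor
    · intro x
      obtain ⟨a, rfl⟩ := Quotient.exists_rep x
      exact ⟨a, a, rfl, rfl, τ.iseqv.refl a⟩
    · rintro x y ⟨a, b, rfl, rfl, hab⟩
      exact ⟨b, a, rfl, rfl, τ.iseqv.symm hab⟩
    · rintro x y z ⟨a, b, rfl, hy, hab⟩ ⟨b', c, hy', rfl, hbc⟩
      refine ⟨a, c, rfl, rfl, τ.iseqv.trans hab (τ.iseqv.trans ?_ hbc)⟩
      exact h _ _ (Quotient.exact (hy.symm.trans hy'))
  compat := by
    rintro s x y ⟨a, b, rfl, rfl, hab⟩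
    exact ⟨s • a, s • b, rfl, rfl, τ.compat s a b hab⟩

/-- The smallest extension of an on-`B` congruence `χ` to the whole act. -/
def extCong {A : Type u} [MulAction S A] (χ : A → A → Prop)
    (hsymm : ∀ a b, χ a b → χ b a) (htrans : ∀ a b c, χ a b → χ b c → χ a c)
    (hcompat : ∀ (s : S) (a b : A), χ a b → χ (s • a) (s • b)) : ActCong S A where
  r a b := a = b ∨ χ a b
  iseqv := by
    constructor
    · exact fun a => Or.inl rfl
    · rintro a b (rfl | h)
      exacts [Or.inl rfl, Or.inr (hsymm _ _ h)]
    · rintro a b c (rfl | h) h'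
      · exact h'
      · rcases h' with rfl | h'
        exacts [Or.inr h, Or.inr (htrans _ _ _ h h')]
  compat := by
    rintro s a b (rfl | h)
    exacts [Or.inl rfl, Or.inr (hcompat s a b h)]

/-- An act `Q` is `r`-injective if every homomorphism into `Q` extends along
every `r`-monomorphism (injective homomorphism with `r`-dense image). -/
def RInjective (S : Type u) [Monoid S] (r : HoehnkeRadical S)
    (Q : Type u) [MulAction S Q] : Prop :=
  ∀ (X B : Type u) [MulAction S X] [MulAction S B] (m : X → B)
    (hm : IsActHom S m), Function.Injective m →
    IsRDense r (Set.range m) (range_closed hm) →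
    ∀ f : X → Q, IsActHom S f → ∃ g : B → Q, IsActHom S g ∧ ∀ x, g (m x) = f x

theorem rinjective_has_zero {S : Type u} [Monoid S] (r : HoehnkeRadical S)
    (hcop : ∀ (ι : Type u) (F : ι → Type u) [∀ i, MulAction S (F i)],
      (∀ i, ∀ x y : F i, (r.rad (F i)).r x y) →
      ∀ x y : (Σ i, F i), (r.rad (Σ i, F i)).r x y)
    (Q : Type u) [MulAction S Q] (hQ : RInjective S r Q) :
    ∃ θ : Q, ∀ s : S, s • θ = θ := by
  classical
  have hm : IsActHom S (Sum.inl : Q → Q ⊕ PUnit.{u+1}) := fun s a => rfl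
  have hdense : IsRDense r (Set.range (Sum.inl : Q → Q ⊕ PUnit.{u+1}))
      (range_closed hm) := by
    set κ := reesCong (Set.range (Sum.inl : Q → Q ⊕ PUnit.{u+1})) (range_closed hm)
      with hκ
    intro x y
    by_cases hne : Nonempty Q
    · obtain ⟨q₀⟩ := hne
      let f : (Σ _ : ULift.{u} Bool, PUnit.{u+1}) → Quotient κ.toSetoid :=
        fun p => if p.1.down then Quotient.mk κ.toSetoid (Sum.inr PUnit.unit)
                 else Quotient.mk κ.toSetoid (Sum.inl q₀)
      have hfhom : IsActHom S f := by
        rintro s ⟨⟨b⟩, u⟩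
        cases b
        · show Quotient.mk κ.toSetoid (Sum.inl q₀)
            = s • Quotient.mk κ.toSetoid (Sum.inl q₀)
          refine (Quotient.sound ?_).symm
          exact Or.inr ⟨⟨s • q₀, rfl⟩, ⟨q₀, rfl⟩⟩
        · rfl
      have hsurj : ∀ z : Quotient κ.toSetoid, ∃ p, z = f p := by
        intro z
        obtain ⟨a, rfl⟩ := Quotient.exists_rep z
        cases a with
        | inl q =>
          exact ⟨⟨⟨false⟩, PUnit.unit⟩, Quotient.sound (Or.inr ⟨⟨q, rfl⟩, ⟨q₀, rfl⟩⟩)⟩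
        | inr u => exact ⟨⟨⟨true⟩, PUnit.unit⟩, rfl⟩
      obtain ⟨px, hx⟩ := hsurj x
      obtain ⟨py, hy⟩ := hsurj y
      rw [hx, hy]
      exact r.functorial f hfhom px py
        (hcop (ULift.{u} Bool) (fun _ => PUnit.{u+1})
          (fun i u v => by cases u; cases v; exact (r.rad _).iseqv.refl _) px py)
    · have : x = y := by
        obtain ⟨a, rfl⟩ := Quotient.exists_rep x
        obtain ⟨b, rfl⟩ := Quotient.exists_rep y
        cases a with
        | inl q => exact absurd ⟨q⟩ hne
        | inr u =>
          cases b with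
          | inl q => exact absurd ⟨q⟩ hne
          | inr v => cases u; cases v; rfl
      rw [this]
      exact (r.rad _).iseqv.refl y
  obtain ⟨g, hg, -⟩ := hQ Q (Q ⊕ PUnit.{u+1}) Sum.inl hm Sum.inl_injective hdense
    id (fun s a => rfl)
  refine ⟨g (Sum.inr PUnit.unit), fun s => ?_⟩
  calc s • g (Sum.inr PUnit.unit) = g (s • Sum.inr PUnit.unit) := (hg s _).symm
    _ = g (Sum.inr PUnit.unit) := rfl
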